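/- Let f : ℝ^d → ℝ be L-smooth, let f, h be twice continuously differentiable and satisfy δ-Hessian similarity with δ > 0, let K ≥ 1 be an integer, and let 0 < η ≤ min(1/L, 1/(192δK)). Given x, m ∈ ℝ^d, define y_0 = x and y_k = y_{k−1} − η(∇h(y_{k−1}) + m) for k = 1,…,K, and set e = m − ∇f(x) + ∇h(x). Then (η/4) Σ_{k=0}^{K−1} ‖∇f(y_k)‖² ≤ f(x) − f(y_K) − δ‖y_K − x‖² + 2ηK‖e‖². -/

import Mathlib

open Finset InnerProductSpace RealInnerProductSpace

section Aux

variable {d : ℕ}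

local notation "E" => EuclideanSpace ℝ (Fin d)

lemma lemB' (f h : E → ℝ) (δ : ℝ) (hδ : 0 < δ)
    (hf : ContDiff ℝ 2 f) (hh : ContDiff ℝ 2 h)
    (hsim : ∀ x, ‖iteratedFDeriv ℝ 2 f x - iteratedFDeriv ℝ 2 h x‖ ≤ δ) :
    ∀ u v : E, ‖(gradient h u - gradient f u) - (gradient h v - gradient f v)‖ ≤ δ * ‖u - v‖ := by
  intro u v
  set g : E → ℝ := fun z => h z - f z with hg
  have hg2 : ContDiff ℝ 2 g := hh.sub hf
  have hgd : Differentiable ℝ g := hg2.differentiable (by norm_num)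
  have hiter : ∀ z : E, ‖iteratedFDeriv ℝ 2 g z‖ ≤ δ := by
    intro z
    have : iteratedFDeriv ℝ 2 g z = iteratedFDeriv ℝ 2 h z - iteratedFDeriv ℝ 2 f z := by
      have hgeq : g = fun w => h w + -(f w) := by funext w; simp [hg, sub_eq_add_neg]
      have h1 : iteratedFDeriv ℝ 2 g z
          = iteratedFDeriv ℝ 2 h z + iteratedFDeriv ℝ 2 (fun w => -(f w)) z := by
        rw [hgeq]; exact iteratedFDeriv_add_apply' hh.contDiffAt hf.neg.contDiffAt
      have h2 : iteratedFDeriv ℝ 2 (fun w => -(f w)) z = - iteratedFDeriv ℝ 2 f z :=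
        iteratedFDeriv_neg_apply
      rw [h1, h2, sub_eq_add_neg]
    rw [this, ← norm_neg]
    simpa [neg_sub] using hsim z
  -- bound on second fderiv
  have hbound : ∀ z : E, ‖fderiv ℝ (fderiv ℝ g) z‖ ≤ δ := by
    intro z
    refine ContinuousLinearMap.opNorm_le_bound _ hδ.le fun a => ?_
    refine ContinuousLinearMap.opNorm_le_bound _ (by positivity) fun b => ?_
    have h2 : fderiv ℝ (fderiv ℝ g) z a b = iteratedFDeriv ℝ 2 g z ![a, b] := by
      rw [iteratedFDeriv_two_apply]; simp
    rw [h2]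
    calc ‖iteratedFDeriv ℝ 2 g z ![a, b]‖
        ≤ ‖iteratedFDeriv ℝ 2 g z‖ * ∏ i, ‖(![a, b]) i‖ :=
          (iteratedFDeriv ℝ 2 g z).le_opNorm _
      _ = ‖iteratedFDeriv ℝ 2 g z‖ * (‖a‖ * ‖b‖) := by
          rw [Fin.prod_univ_two]; simp
      _ ≤ δ * (‖a‖ * ‖b‖) := by
          have : (0:ℝ) ≤ ‖a‖ * ‖b‖ := by positivity
          exact mul_le_mul_of_nonneg_right (hiter z) this
      _ = δ * ‖a‖ * ‖b‖ := by ring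
  have hlip : ‖fderiv ℝ g u - fderiv ℝ g v‖ ≤ δ * ‖u - v‖ := by
    have := Convex.norm_image_sub_le_of_norm_fderiv_le
      (f := fun z => fderiv ℝ g z) (s := Set.univ) (C := δ)
      (fun z _ => ((hg2.fderiv_right (m := 1) (by norm_num)).differentiable one_ne_zero) z)
      (fun z _ => hbound z) convex_univ (Set.mem_univ v) (Set.mem_univ u)
    simpa using this
  have key : ∀ z : E, gradient h z - gradient f z = (toDual ℝ E).symm (fderiv ℝ g z) := by
    intro z
    have : fderiv ℝ g z = fderiv ℝ h z - fderiv ℝ f z :=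
      fderiv_sub (hh.differentiable (by norm_num) z) (hf.differentiable (by norm_num) z)
    rw [this, map_sub]
    rfl
  rw [key u, key v, ← map_sub, LinearIsometryEquiv.norm_map]
  exact hlip

lemma lemA' (f : E → ℝ) (L : ℝ) (hL : 0 < L)
    (hfd : Differentiable ℝ f)
    (hsmooth : ∀ x y : E, ‖gradient f x - gradient f y‖ ≤ L * ‖x - y‖) :
    ∀ a b : E, f b ≤ f a + inner ℝ (gradient f a) (b - a) + L / 2 * ‖b - a‖ ^ 2 := by
  intro a b
  set v : E := b - a with hv
  have hfderiv : ∀ z : E, fderiv ℝ f z = toDual ℝ E (gradient f z) := by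
    intro z
    rw [gradient, LinearIsometryEquiv.apply_symm_apply]
  -- the 1-D function
  set φ : ℝ → ℝ := fun t => f (a + t • v) with hφ
  have hφd : ∀ t : ℝ, HasDerivAt φ (inner ℝ (gradient f (a + t • v)) v) t := by
    intro t
    have hline : HasDerivAt (fun t : ℝ => a + t • v) v t := by
      simpa using ((hasDerivAt_id t).smul_const v).const_add a
    have := (hfd (a + t • v)).hasFDerivAt.comp_hasDerivAt t hline
    simp at this ⊢
    exact this
  set ψ : ℝ → ℝ := fun t => φ t - t * inner ℝ (gradient f a) v - L * t ^ 2 / 2 * ‖v‖ ^ 2 with hψ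
  have hψd : ∀ t : ℝ, HasDerivAt ψ
      (inner ℝ (gradient f (a + t • v)) v - inner ℝ (gradient f a) v - L * t * ‖v‖ ^ 2) t := by
    intro t
    have h1 : HasDerivAt (fun t : ℝ => t * inner ℝ (gradient f a) v)
        (inner ℝ (gradient f a) v) t := by
      simpa using (hasDerivAt_id t).mul_const (inner ℝ (gradient f a) v : ℝ)
    have h2 : HasDerivAt (fun t : ℝ => L * t ^ 2 / 2 * ‖v‖ ^ 2) (L * t * ‖v‖ ^ 2) t := by
      have : HasDerivAt (fun t : ℝ => t ^ 2) (2 * t) t := by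
        simpa using hasDerivAt_pow 2 t
      have := ((this.const_mul L).div_const 2).mul_const (‖v‖ ^ 2)
      rw [show L * t * ‖v‖ ^ 2 = L * (2 * t) / 2 * ‖v‖ ^ 2 by ring]
      exact this
    exact ((hφd t).sub h1).sub h2
  have hmono : AntitoneOn ψ (Set.Icc (0:ℝ) 1) := by
    apply antitoneOn_of_deriv_nonpos (convex_Icc 0 1)
    · exact fun t _ => ((hψd t).continuousAt.continuousWithinAt)
    · exact fun t _ => ((hψd t).differentiableAt).differentiableWithinAt
    · intro t ht
      rw [interior_Icc] at ht
      rw [(hψd t).deriv]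
      have ht0 : 0 ≤ t := le_of_lt ht.1
      have hin : (inner ℝ (gradient f (a + t • v)) v : ℝ) - inner ℝ (gradient f a) v
          = inner ℝ (gradient f (a + t • v) - gradient f a) v := by
        rw [inner_sub_left]
      rw [hin]
      have h3 : (inner ℝ (gradient f (a + t • v) - gradient f a) v : ℝ)
          ≤ ‖gradient f (a + t • v) - gradient f a‖ * ‖v‖ := real_inner_le_norm _ _
      have h4 : ‖gradient f (a + t • v) - gradient f a‖ ≤ L * (t * ‖v‖) := by
        have := hsmooth (a + t • v) a
        simpa [norm_smul, abs_of_nonneg ht0] using this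
      nlinarith [norm_nonneg v, norm_nonneg (gradient f (a + t • v) - gradient f a)]
  have := hmono (Set.mem_Icc.2 ⟨le_refl 0, zero_le_one⟩) (Set.mem_Icc.2 ⟨zero_le_one, le_refl 1⟩)
    zero_le_one
  have hψ0 : ψ 0 = f a := by simp [hψ, hφ]
  have hψ1 : ψ 1 = f b - inner ℝ (gradient f a) v - L / 2 * ‖v‖ ^ 2 := by
    simp [hψ, hφ, hv]
    try ring_nf
  rw [hψ0, hψ1] at this
  linarith

end Aux

set_option maxHeartbeats 1600000 in
theorem stmt_8 {d : ℕ} (f h : EuclideanSpace ℝ (Fin d) → ℝ) (L δ : ℝ)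
    (hL : 0 < L) (hδ : 0 < δ)
    (hfd : Differentiable ℝ f)
    (hsmooth : ∀ x y : EuclideanSpace ℝ (Fin d),
      ‖gradient f x - gradient f y‖ ≤ L * ‖x - y‖)
    (hf : ContDiff ℝ 2 f) (hh : ContDiff ℝ 2 h)
    (hsim : ∀ x, ‖iteratedFDeriv ℝ 2 f x - iteratedFDeriv ℝ 2 h x‖ ≤ δ)
    (K : ℕ) (hK : 1 ≤ K)
    (η : ℝ) (hη0 : 0 < η) (hη : η ≤ min (1 / L) (1 / (192 * δ * K)))
    (x m : EuclideanSpace ℝ (Fin d))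
    (y : ℕ → EuclideanSpace ℝ (Fin d)) (hy0 : y 0 = x)
    (hyk : ∀ k, 1 ≤ k → k ≤ K →
      y k = y (k - 1) - η • (gradient h (y (k - 1)) + m))
    (e : EuclideanSpace ℝ (Fin d)) (he : e = m - gradient f x + gradient h x) :
    (η / 4) * ∑ k ∈ Finset.range K, ‖gradient f (y k)‖ ^ 2
      ≤ f x - f (y K) - δ * ‖y K - x‖ ^ 2 + 2 * η * K * ‖e‖ ^ 2 := by
  have hK0 : (0:ℝ) < (K:ℝ) := by exact_mod_cast hK
  have hηL : η * L ≤ 1 := by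
    have h1 : η ≤ 1 / L := le_trans hη (min_le_left _ _)
    rw [le_div_iff₀ hL] at h1
    linarith
  have hc : η * δ * (K:ℝ) ≤ 1 / 192 := by
    have h1 : η ≤ 1 / (192 * δ * K) := le_trans hη (min_le_right _ _)
    have h2 : (0:ℝ) < 192 * δ * K := by positivity
    rw [le_div_iff₀ h2] at h1
    nlinarith
  have hc0 : (0:ℝ) ≤ η * δ * (K:ℝ) := by positivity
  obtain ⟨r, hr_def⟩ : ∃ r : ℕ → EuclideanSpace ℝ (Fin d),
      r = fun k => (gradient h (y k) - gradient f (y k)) - (gradient h x - gradient f x) :=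
    ⟨_, rfl⟩
  obtain ⟨u, hu_def⟩ : ∃ u : ℕ → EuclideanSpace ℝ (Fin d),
      u = fun k => gradient f (y k) + r k + e := ⟨_, rfl⟩
  have hr : ∀ k, ‖r k‖ ≤ δ * ‖y k - x‖ := by
    intro k; rw [hr_def]; exact lemB' f h δ hδ hf hh hsim (y k) x
  have hstep : ∀ k, k < K → y (k + 1) = y k - η • u k := by
    intro k hk
    have := hyk (k + 1) (by omega) (by omega)
    simp only [Nat.add_sub_cancel] at this
    rw [this]
    congr 1
    simp only [hu_def, hr_def, he]
    abel
  have hdesc : ∀ k, k < K →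
      f (y (k + 1)) ≤ f (y k) - η / 2 * ‖gradient f (y k)‖ ^ 2 + η / 2 * ‖r k + e‖ ^ 2 := by
    intro k hk
    have hA := lemA' f L hL hfd hsmooth (y k) (y (k + 1))
    have hba : y (k + 1) - y k = -(η • u k) := by rw [hstep k hk]; abel
    rw [hba] at hA
    have h1 : (inner ℝ (gradient f (y k)) (-(η • u k)) : ℝ)
        = -(η * inner ℝ (gradient f (y k)) (u k)) := by
      rw [inner_neg_right, real_inner_smul_right]
    have h2 : ‖-(η • u k)‖ ^ 2 = η ^ 2 * ‖u k‖ ^ 2 := by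
      rw [norm_neg, norm_smul, mul_pow, Real.norm_eq_abs, sq_abs]
    rw [h1, h2] at hA
    have h3 : ‖r k + e‖ ^ 2
        = ‖u k‖ ^ 2 - 2 * inner ℝ (gradient f (y k)) (u k) + ‖gradient f (y k)‖ ^ 2 := by
      have : r k + e = u k - gradient f (y k) := by simp only [hu_def]; abel
      rw [this, norm_sub_sq_real, real_inner_comm]
      try ring
    nlinarith [mul_nonneg (mul_nonneg hη0.le (sub_nonneg.2 hηL)) (sq_nonneg ‖u k‖),
      sq_nonneg ‖u k‖, hη0.le]
  have hre : ∀ k, ‖r k + e‖ ^ 2 ≤ 2 * δ ^ 2 * ‖y k - x‖ ^ 2 + 2 * ‖e‖ ^ 2 := by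
    intro k
    have h1 : ‖r k + e‖ ≤ δ * ‖y k - x‖ + ‖e‖ := le_trans (norm_add_le _ _) (by linarith [hr k])
    have h2 : ‖r k + e‖ ^ 2 ≤ (δ * ‖y k - x‖ + ‖e‖) ^ 2 :=
      pow_le_pow_left₀ (norm_nonneg _) h1 2
    nlinarith [two_mul_le_add_sq (δ * ‖y k - x‖) ‖e‖]
  set A2 : ℝ := ∑ k ∈ Finset.range K, ‖gradient f (y k)‖ ^ 2 with hA2_def
  set Ssum : ℝ := ∑ k ∈ Finset.range K, ‖y k - x‖ ^ 2 with hSsum_def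
  have hA2nn : 0 ≤ A2 := by rw [hA2_def]; positivity
  have hsum : f (y K) ≤ f x - η / 2 * A2 + η * δ ^ 2 * Ssum + η * K * ‖e‖ ^ 2 := by
    have tele : f (y K) - f x = ∑ k ∈ Finset.range K, (f (y (k + 1)) - f (y k)) := by
      rw [Finset.sum_range_sub (fun k => f (y k)), hy0]
    have hterm : ∀ k ∈ Finset.range K, f (y (k + 1)) - f (y k)
        ≤ -(η / 2) * ‖gradient f (y k)‖ ^ 2 + η * δ ^ 2 * ‖y k - x‖ ^ 2 + η * ‖e‖ ^ 2 := by
      intro k hk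
      rw [Finset.mem_range] at hk
      have := hdesc k hk
      have := hre k
      nlinarith [hη0.le]
    have hle := Finset.sum_le_sum hterm
    rw [← tele] at hle
    have heq : ∑ k ∈ Finset.range K,
        (-(η / 2) * ‖gradient f (y k)‖ ^ 2 + η * δ ^ 2 * ‖y k - x‖ ^ 2 + η * ‖e‖ ^ 2)
        = -(η / 2) * A2 + η * δ ^ 2 * Ssum + (K : ℝ) * (η * ‖e‖ ^ 2) := by
      rw [Finset.sum_add_distrib, Finset.sum_add_distrib, ← Finset.mul_sum, ← Finset.mul_sum,
        Finset.sum_const, Finset.card_range, nsmul_eq_mul, hA2_def, hSsum_def]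
    rw [heq] at hle
    linarith
  have hdisp : ∀ k, k ≤ K → y k - x = -(η • ∑ j ∈ Finset.range k, u j) := by
    intro k
    induction k with
    | zero => intro _; simp [hy0]
    | succ n ih =>
      intro hn
      have hn' : n ≤ K := by omega
      have hstepn := hstep n (by omega)
      calc y (n + 1) - x = (y n - x) - η • u n := by rw [hstepn]; abel
        _ = -(η • ∑ j ∈ Finset.range n, u j) - η • u n := by rw [ih hn']
        _ = -(η • ∑ j ∈ Finset.range (n + 1), u j) := by
              rw [Finset.sum_range_succ, smul_add]; abel
  have hSle : ∀ k, k ≤ K → ‖y k - x‖ ≤ η * ∑ j ∈ Finset.range k, ‖u j‖ := by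
    intro k hk
    rw [hdisp k hk, norm_neg, norm_smul, Real.norm_eq_abs, abs_of_pos hη0]
    exact mul_le_mul_of_nonneg_left (norm_sum_le _ _) hη0.le
  have hunorm : ∀ j, ‖u j‖ ≤ ‖gradient f (y j)‖ + δ * ‖y j - x‖ + ‖e‖ := by
    intro j
    simp only [hu_def]
    refine le_trans (norm_add_le _ _) ?_
    have := le_trans (norm_add_le (gradient f (y j)) (r j)) (by linarith [hr j] :
      ‖gradient f (y j)‖ + ‖r j‖ ≤ ‖gradient f (y j)‖ + δ * ‖y j - x‖)
    linarith
  have hCS : ∑ j ∈ Finset.range K, ‖gradient f (y j)‖ ≤ Real.sqrt K * Real.sqrt A2 := by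
    have hT0 : 0 ≤ ∑ j ∈ Finset.range K, ‖gradient f (y j)‖ :=
      Finset.sum_nonneg fun j _ => norm_nonneg _
    have hsq : (∑ j ∈ Finset.range K, ‖gradient f (y j)‖) ^ 2 ≤ (K : ℝ) * A2 := by
      have := sq_sum_le_card_mul_sum_sq (s := Finset.range K)
        (f := fun j => ‖gradient f (y j)‖)
      simpa [hA2_def] using this
    calc ∑ j ∈ Finset.range K, ‖gradient f (y j)‖
        = Real.sqrt ((∑ j ∈ Finset.range K, ‖gradient f (y j)‖) ^ 2) :=
          (Real.sqrt_sq hT0).symm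
      _ ≤ Real.sqrt ((K : ℝ) * A2) := Real.sqrt_le_sqrt hsq
      _ = Real.sqrt K * Real.sqrt A2 := Real.sqrt_mul (by positivity) _
  set B : ℝ := 2 * η * (Real.sqrt K * Real.sqrt A2 + (K : ℝ) * ‖e‖) with hB_def
  have hB0 : 0 ≤ B := by
    rw [hB_def]
    exact mul_nonneg (by linarith)
      (add_nonneg (mul_nonneg (Real.sqrt_nonneg _) (Real.sqrt_nonneg _))
        (mul_nonneg hK0.le (norm_nonneg e)))
  have hSB : ∀ k, k ≤ K → ‖y k - x‖ ≤ B := by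
    intro k
    induction k using Nat.strong_induction_on with
    | _ k ih =>
      intro hkK
      have step1 : ‖y k - x‖ ≤ η * ∑ j ∈ Finset.range k, ‖u j‖ := hSle k hkK
      have step2 : ∑ j ∈ Finset.range k, ‖u j‖
          ≤ ∑ j ∈ Finset.range k, (‖gradient f (y j)‖ + (δ * B + ‖e‖)) := by
        refine Finset.sum_le_sum fun j hj => ?_
        rw [Finset.mem_range] at hj
        have hjK : j ≤ K := by omega
        have hSj : ‖y j - x‖ ≤ B := ih j hj hjK
        have h5 : δ * ‖y j - x‖ ≤ δ * B := mul_le_mul_of_nonneg_left hSj hδ.le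
        linarith [hunorm j]
      have step3 : ∑ j ∈ Finset.range k, (‖gradient f (y j)‖ + (δ * B + ‖e‖))
          = (∑ j ∈ Finset.range k, ‖gradient f (y j)‖) + (k : ℝ) * (δ * B + ‖e‖) := by
        rw [Finset.sum_add_distrib, Finset.sum_const, Finset.card_range, nsmul_eq_mul]
      have step4 : ∑ j ∈ Finset.range k, ‖gradient f (y j)‖
          ≤ ∑ j ∈ Finset.range K, ‖gradient f (y j)‖ := by
        refine Finset.sum_le_sum_of_subset_of_nonneg ?_ fun j _ _ => norm_nonneg _
        exact Finset.range_subset_range.2 hkK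
      have hkK' : (k : ℝ) ≤ (K : ℝ) := by exact_mod_cast hkK
      have hδB : 0 ≤ δ * B + ‖e‖ := add_nonneg (mul_nonneg hδ.le hB0) (norm_nonneg _)
      have chain : ‖y k - x‖ ≤ η * (Real.sqrt K * Real.sqrt A2
          + (K : ℝ) * (δ * B + ‖e‖)) := by
        calc ‖y k - x‖ ≤ η * ∑ j ∈ Finset.range k, ‖u j‖ := step1
          _ ≤ η * ((∑ j ∈ Finset.range k, ‖gradient f (y j)‖) + (k : ℝ) * (δ * B + ‖e‖)) := by
              rw [← step3]
              exact mul_le_mul_of_nonneg_left step2 hη0.le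
          _ ≤ η * (Real.sqrt K * Real.sqrt A2 + (K : ℝ) * (δ * B + ‖e‖)) := by
              refine mul_le_mul_of_nonneg_left ?_ hη0.le
              have := le_trans step4 hCS
              nlinarith
      have expand : η * (Real.sqrt K * Real.sqrt A2 + (K : ℝ) * (δ * B + ‖e‖))
          = B / 2 + (η * δ * (K : ℝ)) * B := by
        rw [hB_def]; ring
      rw [expand] at chain
      nlinarith
  have hSK : ‖y K - x‖ ≤ B := hSB K le_rfl
  have hSsumB : Ssum ≤ (K : ℝ) * B ^ 2 := by
    rw [hSsum_def]
    calc ∑ k ∈ Finset.range K, ‖y k - x‖ ^ 2 ≤ ∑ _k ∈ Finset.range K, B ^ 2 := by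
          refine Finset.sum_le_sum fun k hk => ?_
          rw [Finset.mem_range] at hk
          exact pow_le_pow_left₀ (norm_nonneg _) (hSB k (by omega)) 2
      _ = (K : ℝ) * B ^ 2 := by rw [Finset.sum_const, Finset.card_range, nsmul_eq_mul]
  have sqK : Real.sqrt K ^ 2 = (K : ℝ) := Real.sq_sqrt (by positivity)
  have sqA : Real.sqrt A2 ^ 2 = A2 := Real.sq_sqrt hA2nn
  have hB2 : B ^ 2 ≤ 8 * η ^ 2 * ((K : ℝ) * A2 + (K : ℝ) ^ 2 * ‖e‖ ^ 2) := by
    have ha2 : (Real.sqrt K * Real.sqrt A2) ^ 2 = (K : ℝ) * A2 := by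
      rw [mul_pow, sqK, sqA]
    have hab : (Real.sqrt K * Real.sqrt A2 + (K : ℝ) * ‖e‖) ^ 2
        ≤ 2 * ((K : ℝ) * A2) + 2 * ((K : ℝ) ^ 2 * ‖e‖ ^ 2) := by
      nlinarith [sq_nonneg (Real.sqrt K * Real.sqrt A2 - (K : ℝ) * ‖e‖), ha2]
    calc B ^ 2 = 4 * η ^ 2 * (Real.sqrt K * Real.sqrt A2 + (K : ℝ) * ‖e‖) ^ 2 := by
          rw [hB_def]; ring
      _ ≤ 4 * η ^ 2 * (2 * ((K : ℝ) * A2) + 2 * ((K : ℝ) ^ 2 * ‖e‖ ^ 2)) :=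
          mul_le_mul_of_nonneg_left hab (by positivity)
      _ = 8 * η ^ 2 * ((K : ℝ) * A2 + (K : ℝ) ^ 2 * ‖e‖ ^ 2) := by ring
  have hfinal : δ * ‖y K - x‖ ^ 2 + η * δ ^ 2 * Ssum ≤ η / 4 * A2 + η * K * ‖e‖ ^ 2 := by
    have e0 : 0 ≤ ‖y K - x‖ := norm_nonneg _
    have e5 : 0 ≤ δ * B ^ 2 := mul_nonneg hδ.le (sq_nonneg B)
    have hP0 : 0 ≤ η * A2 := mul_nonneg hη0.le hA2nn
    have hQ0 : 0 ≤ η * ((K : ℝ) * ‖e‖ ^ 2) := by positivity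
    have hD0 : 0 ≤ η * A2 + η * ((K : ℝ) * ‖e‖ ^ 2) := add_nonneg hP0 hQ0
    have e1 : δ * ‖y K - x‖ ^ 2 ≤ δ * B ^ 2 :=
      mul_le_mul_of_nonneg_left (pow_le_pow_left₀ e0 hSK 2) hδ.le
    have f1 : δ * B ^ 2
        ≤ 8 * (η * δ * (K : ℝ)) * (η * A2 + η * ((K : ℝ) * ‖e‖ ^ 2)) := by
      calc δ * B ^ 2 ≤ δ * (8 * η ^ 2 * ((K : ℝ) * A2 + (K : ℝ) ^ 2 * ‖e‖ ^ 2)) :=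
            mul_le_mul_of_nonneg_left hB2 hδ.le
        _ = 8 * (η * δ * (K : ℝ)) * (η * A2 + η * ((K : ℝ) * ‖e‖ ^ 2)) := by ring
    have f2 : (η * δ * (K : ℝ)) * (η * A2 + η * ((K : ℝ) * ‖e‖ ^ 2))
        ≤ (1 / 192) * (η * A2 + η * ((K : ℝ) * ‖e‖ ^ 2)) :=
      mul_le_mul_of_nonneg_right hc hD0
    have f3 : η * δ ^ 2 * Ssum ≤ (η * δ * (K : ℝ)) * (δ * B ^ 2) := by
      calc η * δ ^ 2 * Ssum ≤ η * δ ^ 2 * ((K : ℝ) * B ^ 2) :=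
            mul_le_mul_of_nonneg_left hSsumB (by positivity)
        _ = (η * δ * (K : ℝ)) * (δ * B ^ 2) := by ring
    have f4 : (η * δ * (K : ℝ)) * (δ * B ^ 2) ≤ (1 / 192) * (δ * B ^ 2) :=
      mul_le_mul_of_nonneg_right hc e5
    linarith
  linarith
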